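/- Let n ≥ 3 and let x₁, …, x_n ∈ ℝ³ be the vertices of a closed polygon, i.e. x_i ≠ x_{i+1} for all i (indices modulo n). For each i let α_i ∈ [0, π] be the angle at x_i between the vectors x_{i−1} − x_i and x_{i+1} − x_i. Then α₁ + α₂ + … + α_n ≤ (n − 2)π. In particular, the five interior angles of any closed pentagon in ℝ³ sum to at most 3π, and the six interior angles of any closed hexagon in ℝ³ sum to at most 4π. -/

import Mathlib

open Real


section VecAngle
variable {V : Type*} [NormedAddCommGroup V] [InnerProductSpace ℝ V]
open InnerProductGeometry

local notation "⟪" x ", " y "⟫" => @inner ℝ _ _ x y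

lemma angle_triangle_unit {u v w : V} (hu : ‖u‖ = 1) (hv : ‖v‖ = 1) (hw : ‖w‖ = 1) :
    angle u w ≤ angle u v + angle v w := by
  by_cases hπ : π ≤ angle u v + angle v w
  · exact (angle_le_pi u w).trans hπ
  push_neg at hπ
  set a := ⟪u, v⟫ with ha
  set b := ⟪v, w⟫ with hb
  have h1u : ⟪u, u⟫ = 1 := by rw [real_inner_self_eq_norm_sq, hu]; norm_num
  have h1v : ⟪v, v⟫ = 1 := by rw [real_inner_self_eq_norm_sq, hv]; norm_num
  have h1w : ⟪w, w⟫ = 1 := by rw [real_inner_self_eq_norm_sq, hw]; norm_num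
  set p := u - a • v with hpdef
  set q := w - b • v with hqdef
  have hvu : ⟪v, u⟫ = a := by rw [real_inner_comm]
  have hwv : ⟪w, v⟫ = b := by rw [real_inner_comm]
  have hpp : ⟪p, p⟫ = 1 - a * a := by
    simp only [hpdef, inner_sub_left, inner_sub_right, real_inner_smul_left,
      real_inner_smul_right, h1u, h1v, hvu, ← ha]
    ring
  have hqq : ⟪q, q⟫ = 1 - b * b := by
    simp only [hqdef, inner_sub_left, inner_sub_right, real_inner_smul_left,
      real_inner_smul_right, h1w, h1v, hwv, ← hb]
    ring
  have hpq : ⟪p, q⟫ = ⟪u, w⟫ - a * b := by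
    simp only [hpdef, hqdef, inner_sub_left, inner_sub_right, real_inner_smul_left,
      real_inner_smul_right, h1v, hvu, ← ha]
    have hvw : ⟪v, w⟫ = b := hb.symm
    rw [hvw]; ring
  have hpnorm : ‖p‖ = Real.sqrt (1 - a * a) := by
    rw [← hpp, real_inner_self_eq_norm_sq, Real.sqrt_sq (norm_nonneg p)]
  have hqnorm : ‖q‖ = Real.sqrt (1 - b * b) := by
    rw [← hqq, real_inner_self_eq_norm_sq, Real.sqrt_sq (norm_nonneg q)]
  have hsa : Real.sin (angle u v) = ‖p‖ := by
    have h := sin_angle_mul_norm_mul_norm u v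
    rw [hu, hv, h1u, h1v] at h
    rw [hpnorm]
    simpa using h
  have hsb : Real.sin (angle v w) = ‖q‖ := by
    have h := sin_angle_mul_norm_mul_norm v w
    rw [hv, hw, h1v, h1w] at h
    rw [hqnorm]
    simpa using h
  have hca : Real.cos (angle u v) = a := by
    rw [cos_angle, hu, hv]; simp [ha]
  have hcb : Real.cos (angle v w) = b := by
    rw [cos_angle, hv, hw]; simp [hb]
  have hcw : Real.cos (angle u w) = ⟪u, w⟫ := by
    rw [cos_angle, hu, hw]; simp
  have hcs : -(‖p‖ * ‖q‖) ≤ ⟪p, q⟫ := (abs_le.1 (abs_real_inner_le_norm p q)).1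
  have key : Real.cos (angle u v + angle v w) ≤ Real.cos (angle u w) := by
    rw [Real.cos_add, hca, hcb, hsa, hsb, hcw]
    linarith [hpq ▸ hcs]
  have h1 : angle u v + angle v w ∈ Set.Icc 0 π :=
    ⟨add_nonneg (angle_nonneg u v) (angle_nonneg v w), hπ.le⟩
  have h2 : angle u w ∈ Set.Icc 0 π := ⟨angle_nonneg u w, angle_le_pi u w⟩
  exact (Real.strictAntiOn_cos.le_iff_ge h1 h2).1 key

lemma angle_triangle' (x y z : V) : angle x z ≤ angle x y + angle y z := by
  rcases eq_or_ne x 0 with rfl | hx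
  · rw [angle_zero_left, angle_zero_left]
    linarith [angle_nonneg y z]
  rcases eq_or_ne z 0 with rfl | hz
  · rw [angle_zero_right, angle_zero_right]
    linarith [angle_nonneg x y]
  rcases eq_or_ne y 0 with rfl | hy
  · rw [angle_zero_left, angle_zero_right]
    linarith [angle_le_pi x z]
  have hxn : (0:ℝ) < ‖x‖⁻¹ := inv_pos.2 (norm_pos_iff.2 (by assumption))
  have hyn : (0:ℝ) < ‖y‖⁻¹ := inv_pos.2 (norm_pos_iff.2 (by assumption))
  have hzn : (0:ℝ) < ‖z‖⁻¹ := inv_pos.2 (norm_pos_iff.2 (by assumption))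
  have e1 : angle x z = angle (‖x‖⁻¹ • x) (‖z‖⁻¹ • z) := by
    rw [angle_smul_left_of_pos _ _ hxn, angle_smul_right_of_pos _ _ hzn]
  have e2 : angle x y = angle (‖x‖⁻¹ • x) (‖y‖⁻¹ • y) := by
    rw [angle_smul_left_of_pos _ _ hxn, angle_smul_right_of_pos _ _ hyn]
  have e3 : angle y z = angle (‖y‖⁻¹ • y) (‖z‖⁻¹ • z) := by
    rw [angle_smul_left_of_pos _ _ hyn, angle_smul_right_of_pos _ _ hzn]
  rw [e1, e2, e3]
  exact angle_triangle_unit (norm_smul_inv_norm hx) (norm_smul_inv_norm hy)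
    (norm_smul_inv_norm hz)

end VecAngle

section PtAngle
variable {V P : Type*} [NormedAddCommGroup V] [InnerProductSpace ℝ V]
  [MetricSpace P] [NormedAddTorsor V P]
open EuclideanGeometry

lemma angle_pt_triangle (p q r s : P) : ∠ p q r ≤ ∠ p q s + ∠ s q r :=
  angle_triangle' (p -ᵥ q) (s -ᵥ q) (r -ᵥ q)

end PtAngle

open Real EuclideanGeometry

lemma sum_shift_one {m : ℕ} {f : ℕ → ℝ} (hf : ∀ k, f (k + m) = f k) :
    ∑ k ∈ Finset.range m, f (k + 1) = ∑ k ∈ Finset.range m, f k := by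
  have h1 := Finset.sum_range_succ' f m
  have h2 := Finset.sum_range_succ f m
  have h0 : f m = f 0 := by simpa using hf 0
  linarith [h1, h2]

lemma sum_shift {m : ℕ} {f : ℕ → ℝ} (hf : ∀ k, f (k + m) = f k) (j : ℕ) :
    ∑ k ∈ Finset.range m, f (k + j) = ∑ k ∈ Finset.range m, f k := by
  induction j with
  | zero => simp
  | succ j ih =>
    have h : ∑ k ∈ Finset.range m, f (k + 1 + j) = ∑ k ∈ Finset.range m, f (k + j) :=
      sum_shift_one (f := fun k => f (k + j))
        (fun k => by show f (k + m + j) = f (k + j); rw [Nat.add_right_comm]; exact hf (k + j))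
    calc ∑ k ∈ Finset.range m, f (k + (j + 1))
        = ∑ k ∈ Finset.range m, f (k + 1 + j) := by
          apply Finset.sum_congr rfl; intro k _; ring_nf
      _ = ∑ k ∈ Finset.range m, f (k + j) := h
      _ = ∑ k ∈ Finset.range m, f k := ih

lemma polygon_aux : ∀ m, 3 ≤ m → ∀ x : ℕ → EuclideanSpace ℝ (Fin 3),
    (∀ k, x (k + m) = x k) → (∀ k, x k ≠ x (k + 1)) →
    ∑ k ∈ Finset.range m, ∠ (x k) (x (k+1)) (x (k+2)) ≤ ((m : ℝ) - 2) * π := by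
  intro m hm
  induction m, hm using Nat.le_induction with
  | base =>
    intro x hper hcons
    have h3 : x 3 = x 0 := by simpa using hper 0
    have h4 : x 4 = x 1 := by simpa using hper 1
    rw [Finset.sum_range_succ, Finset.sum_range_succ, Finset.sum_range_succ,
      Finset.sum_range_zero]
    norm_num
    have h20 : x 2 ≠ x 0 := by
      intro h; exact hcons 2 (h.trans h3.symm)
    have := EuclideanGeometry.angle_add_angle_add_angle_eq_pi
      (p₁ := x 0) (p₂ := x 1) (x 2) (hcons 0).symm
    rw [h3, h4]
    linarith
  | succ m hm ih =>
    intro x hper hcons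
    by_cases hdeg : ∀ k, x k = x (k + 2)
    · have hz : ∑ k ∈ Finset.range (m+1), ∠ (x k) (x (k+1)) (x (k+2)) = 0 := by
        apply Finset.sum_eq_zero
        intro k _
        rw [← hdeg k]
        exact EuclideanGeometry.angle_self_of_ne (hcons k)
      rw [hz]
      have hm3 : (3:ℝ) ≤ (m:ℝ) := by exact_mod_cast hm
      push_cast
      nlinarith [Real.pi_pos]
    push_neg at hdeg
    obtain ⟨i0, hi0⟩ := hdeg
    obtain ⟨l, rfl⟩ : ∃ l, m = l + 3 := ⟨m - 3, by omega⟩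
    set N := l + 4 with hN
    -- rotated polygon
    set x' : ℕ → EuclideanSpace ℝ (Fin 3) := fun k => x (k + (i0 + 2)) with hx'
    have hper' : ∀ k, x' (k + N) = x' k := by
      intro k
      show x (k + N + (i0 + 2)) = x (k + (i0 + 2))
      have : k + N + (i0 + 2) = (k + (i0 + 2)) + N := by omega
      rw [this]
      exact hper _
    have hcons' : ∀ k, x' k ≠ x' (k + 1) := by
      intro k
      show x (k + (i0 + 2)) ≠ x (k + 1 + (i0 + 2))
      have : k + 1 + (i0 + 2) = (k + (i0 + 2)) + 1 := by omega
      rw [this]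
      exact hcons _
    have hrot : x' (l + 2) ≠ x' 0 := by
      show x (l + 2 + (i0 + 2)) ≠ x (0 + (i0 + 2))
      have e1 : l + 2 + (i0 + 2) = i0 + N := by omega
      have e2 : i0 + N = i0 + (l + 4) := rfl
      rw [e1]
      rw [hper i0]
      simpa using hi0
    -- the reduced polygon: drop vertex x' (l+3)
    set y : ℕ → EuclideanSpace ℝ (Fin 3) := fun k => x' (k % (l + 3)) with hy
    have hyper : ∀ k, y (k + (l + 3)) = y k := by
      intro k
      show x' ((k + (l + 3)) % (l + 3)) = x' (k % (l + 3))
      rw [Nat.add_mod_right]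
    have hycons : ∀ k, y k ≠ y (k + 1) := by
      intro k
      show x' (k % (l + 3)) ≠ x' ((k + 1) % (l + 3))
      have hk : k % (l + 3) < l + 3 := Nat.mod_lt _ (by omega)
      have hmod : (k + 1) % (l + 3) = (k % (l + 3) + 1) % (l + 3) := by
        conv_lhs => rw [Nat.add_mod]
        rw [Nat.mod_eq_of_lt (show 1 < l + 3 by omega)]
      by_cases hc : k % (l + 3) = l + 2
      · rw [hmod, hc, show l + 2 + 1 = l + 3 from rfl, Nat.mod_self]
        exact hrot
      · rw [hmod, Nat.mod_eq_of_lt (show k % (l + 3) + 1 < l + 3 by omega)]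
        exact hcons' _
    have hB := ih y hyper hycons
    -- values of y
    have hyv : ∀ k, k < l + 3 → y k = x' k := by
      intro k hk
      show x' (k % (l + 3)) = x' k
      rw [Nat.mod_eq_of_lt hk]
    have hy3 : y (l + 3) = x' 0 := by
      show x' ((l + 3) % (l + 3)) = x' 0
      rw [Nat.mod_self]
    have hy4 : y (l + 4) = x' 1 := by
      show x' ((l + 4) % (l + 3)) = x' 1
      rw [show l + 4 = 1 + (l + 3) by omega, Nat.add_mod_right,
        Nat.mod_eq_of_lt (show 1 < l + 3 by omega)]
    have h40 : x' (l + 4) = x' 0 := by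
      have := hper' 0
      rwa [Nat.zero_add] at this
    have h51 : x' (l + 5) = x' 1 := by
      have := hper' 1
      rwa [show 1 + N = l + 5 by omega] at this
    -- split the reduced sum
    have hsplitB : ∑ k ∈ Finset.range (l + 3), ∠ (y k) (y (k+1)) (y (k+2))
        = (∑ k ∈ Finset.range (l + 1), ∠ (x' k) (x' (k+1)) (x' (k+2)))
          + ∠ (x' (l+1)) (x' (l+2)) (x' 0) + ∠ (x' (l+2)) (x' 0) (x' 1) := by
      rw [show l + 3 = (l + 2) + 1 by omega, Finset.sum_range_succ,
        show l + 2 = (l + 1) + 1 by omega, Finset.sum_range_succ]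
      rw [show l + 1 + 1 = l + 2 by omega, show l + 1 + 1 + 1 = l + 3 by omega,
        show l + 2 + 1 = l + 3 by omega, show l + 2 + 1 + 1 = l + 4 by omega]
      rw [hy3, hy4, hyv (l+1) (by omega), hyv (l+2) (by omega)]
      have : ∑ k ∈ Finset.range (l + 1), ∠ (y k) (y (k+1)) (y (k+2))
          = ∑ k ∈ Finset.range (l + 1), ∠ (x' k) (x' (k+1)) (x' (k+2)) := by
        apply Finset.sum_congr rfl
        intro k hk
        have hk' := Finset.mem_range.1 hk
        rw [hyv k (by omega), hyv (k+1) (by omega), hyv (k+2) (by omega)]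
      rw [this]
    -- split the big sum over x'
    have hsplitA : ∑ k ∈ Finset.range (l + 4), ∠ (x' k) (x' (k+1)) (x' (k+2))
        = (∑ k ∈ Finset.range (l + 1), ∠ (x' k) (x' (k+1)) (x' (k+2)))
          + ∠ (x' (l+1)) (x' (l+2)) (x' (l+3)) + ∠ (x' (l+2)) (x' (l+3)) (x' 0)
          + ∠ (x' (l+3)) (x' 0) (x' 1) := by
      rw [show l + 4 = (l + 3) + 1 by omega, Finset.sum_range_succ,
        show l + 3 = (l + 2) + 1 by omega, Finset.sum_range_succ,
        show l + 2 = (l + 1) + 1 by omega, Finset.sum_range_succ]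
      rw [show l + 1 + 1 = l + 2 by omega, show l + 1 + 1 + 1 = l + 3 by omega,
        show l + 2 + 1 = l + 3 by omega, show l + 2 + 1 + 1 = l + 4 by omega,
        show l + 3 + 1 = l + 4 by omega, show l + 3 + 1 + 1 = l + 5 by omega]
      rw [h40, h51]
    -- triangle facts
    have hc0 : x' (l + 3) ≠ x' 0 := by
      have := hcons' (l + 3)
      rwa [show l + 3 + 1 = l + 4 by omega, h40] at this
    have htri := EuclideanGeometry.angle_add_angle_add_angle_eq_pi
      (p₁ := x' 0) (p₂ := x' (l+2)) (x' (l+3)) hrot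
    have ht1 := angle_pt_triangle (x' (l+1)) (x' (l+2)) (x' (l+3)) (x' 0)
    have ht2 := angle_pt_triangle (x' (l+3)) (x' 0) (x' 1) (x' (l+2))
    -- relate the sum over x to the sum over x'
    have hAA : ∑ k ∈ Finset.range (l + 4), ∠ (x' k) (x' (k+1)) (x' (k+2))
        = ∑ k ∈ Finset.range (l + 4), ∠ (x k) (x (k+1)) (x (k+2)) := by
      have hfp : ∀ k, (fun k => ∠ (x k) (x (k+1)) (x (k+2))) (k + (l + 4))
          = (fun k => ∠ (x k) (x (k+1)) (x (k+2))) k := by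
        intro k
        show ∠ (x (k + (l+4))) (x (k + (l+4) + 1)) (x (k + (l+4) + 2))
          = ∠ (x k) (x (k+1)) (x (k+2))
        rw [show k + (l+4) + 1 = (k+1) + (l+4) by omega,
          show k + (l+4) + 2 = (k+2) + (l+4) by omega]
        rw [hper k, hper (k+1), hper (k+2)]
      calc ∑ k ∈ Finset.range (l + 4), ∠ (x' k) (x' (k+1)) (x' (k+2))
          = ∑ k ∈ Finset.range (l + 4),
              (fun k => ∠ (x k) (x (k+1)) (x (k+2))) (k + (i0 + 2)) := by
            apply Finset.sum_congr rfl
            intro k _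
            show ∠ (x (k + (i0+2))) (x (k + 1 + (i0+2))) (x (k + 2 + (i0+2)))
              = ∠ (x (k + (i0+2))) (x (k + (i0+2) + 1)) (x (k + (i0+2) + 2))
            rw [show k + 1 + (i0+2) = k + (i0+2) + 1 by omega,
              show k + 2 + (i0+2) = k + (i0+2) + 2 by omega]
        _ = ∑ k ∈ Finset.range (l + 4), ∠ (x k) (x (k+1)) (x (k+2)) :=
            sum_shift (f := fun k => ∠ (x k) (x (k+1)) (x (k+2))) hfp (i0 + 2)
    rw [← hAA, hsplitA]
    rw [hsplitB] at hB
    push_cast at hB ⊢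
    linarith [show ((N:ℝ) - 2) * π = ((l:ℝ) + 2) * π by rw [hN]; push_cast; ring]

/-- the interior angles of a closed polygon `x₁, …, x_n` in `ℝ³`
(consecutive vertices distinct, indices modulo `n`, `n ≥ 3`) sum to at most `(n − 2)π`.
In particular, the five angles of a closed pentagon sum to at most `3π` and the six
angles of a closed hexagon sum to at most `4π`. -/
theorem stmt14
    (n : ℕ) [NeZero n] (hn : 3 ≤ n)
    (x : ZMod n → EuclideanSpace ℝ (Fin 3))
    (hconsec : ∀ i : ZMod n, x i ≠ x (i + 1)) :
    ∑ i : ZMod n, EuclideanGeometry.angle (x (i - 1)) (x i) (x (i + 1)) ≤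
      ((n : ℝ) - 2) * Real.pi := by
  have hper : ∀ k : ℕ, x (((k + n : ℕ) : ZMod n)) = x ((k : ZMod n)) := by
    intro k
    have : ((k + n : ℕ) : ZMod n) = (k : ZMod n) := by
      push_cast [ZMod.natCast_self]
      ring
    rw [this]
  have hcons' : ∀ k : ℕ, x ((k : ZMod n)) ≠ x (((k + 1 : ℕ) : ZMod n)) := by
    intro k
    have : ((k + 1 : ℕ) : ZMod n) = (k : ZMod n) + 1 := by push_cast; ring
    rw [this]
    exact hconsec _
  have key := polygon_aux n hn (fun k => x ((k : ZMod n))) hper hcons'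
  have hsum : ∑ k ∈ Finset.range n,
      ∠ (x ((k : ZMod n))) (x (((k+1 : ℕ) : ZMod n))) (x (((k+2 : ℕ) : ZMod n)))
      = ∑ i : ZMod n, ∠ (x (i - 1)) (x i) (x (i + 1)) := by
    refine Finset.sum_bij' (fun k _ => ((k : ZMod n) + 1))
      (fun a _ => (a - 1).val) ?_ ?_ ?_ ?_ ?_
    · intro k _
      exact Finset.mem_univ _
    · intro a _
      exact Finset.mem_range.2 (ZMod.val_lt _)
    · intro k hk
      simp only [add_sub_cancel_right]
      exact ZMod.val_cast_of_lt (Finset.mem_range.1 hk)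
    · intro a _
      show ((((a - 1).val : ℕ) : ZMod n) + 1) = a
      rw [ZMod.natCast_rightInverse (a - 1)]
      ring
    · intro k hk
      rw [show ((k + 1 : ℕ) : ZMod n) = (k : ZMod n) + 1 by push_cast; ring,
        show ((k + 2 : ℕ) : ZMod n) = (k : ZMod n) + 1 + 1 by push_cast; ring,
        show ((k : ℕ) : ZMod n) = (k : ZMod n) + 1 - 1 by ring]
      simp only [add_sub_cancel_right]
  rw [← hsum]
  exact key
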